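/- Let k ≥ 1 and i₁, …, i_k ≥ 1 be integers, and let M = Mon⟨a, b | b a^{i₁} b a^{i₂} ⋯ b a^{i_k} b a = a⟩. Then for every nonempty word w that is a product of factors from {a, ba}, the element of M represented by w is L-related to the image of a in M; that is, the principal left ideals M·w̄ and M·ā coincide, where w̄ and ā denote the images of w and a in M. -/

import Mathlib

/-- The `i`-fold concatenation of a word with itself. -/
def listPow {σ : Type*} (w : List σ) (i : ℕ) : List σ :=
  (List.replicate i w).flatten

/-- The one-relation monoid `Mon⟨A | u = v⟩` over the alphabet `Fin k`. -/
abbrev OneRelMonoid {k : ℕ} (u v : List (Fin k)) :=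
  PresentedMonoid (fun x y : FreeMonoid (Fin k) =>
    x = FreeMonoid.ofList u ∧ y = FreeMonoid.ofList v)

/-- Evaluation of a word in the one-relation monoid. -/
def OneRelMonoid.eval {k : ℕ} (u v : List (Fin k)) (w : List (Fin k)) :
    OneRelMonoid u v :=
  PresentedMonoid.mk _ (FreeMonoid.ofList w)

/-- The letter `a`. -/
def aw : List (Fin 2) := [0]

/-- The letter `b`. -/
def bw : List (Fin 2) := [1]

/-- The word `b a^{i₁} b a^{i₂} ⋯ b a^{i_k} b a`. -/
def monadicLhs (k : ℕ) (I : Fin k → ℕ) : List (Fin 2) :=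
  (List.ofFn fun j : Fin k => bw ++ listPow aw (I j)).flatten ++ bw ++ aw

/- ---------- auxiliary material ---------- -/

theorem MyAux.eval_append {k : ℕ} (u v x y : List (Fin k)) :
    OneRelMonoid.eval u v (x ++ y) =
      OneRelMonoid.eval u v x * OneRelMonoid.eval u v y := by
  show PresentedMonoid.mk _ (FreeMonoid.ofList (x ++ y)) = _
  rw [FreeMonoid.ofList_append, map_mul]
  rfl

theorem MyAux.eval_rel {k : ℕ} (u v : List (Fin k)) :
    OneRelMonoid.eval u v u = OneRelMonoid.eval u v v := by
  apply Quotient.sound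
  exact ConGen.Rel.of _ _ ⟨rfl, rfl⟩

theorem MyAux.listPow_succ {σ : Type*} (w : List σ) (n : ℕ) :
    listPow w (n + 1) = w ++ listPow w n := by
  simp [listPow, List.replicate_succ]

theorem MyAux.listPow_succ' {σ : Type*} (w : List σ) (n : ℕ) :
    listPow w (n + 1) = listPow w n ++ w := by
  simp [listPow, List.replicate_succ']

/-- The word `B = b a^{i₁} ⋯ b a^{i_k}`. -/
def MyAux.Bword (k : ℕ) (I : Fin k → ℕ) : List (Fin 2) :=
  (List.ofFn fun j : Fin k => bw ++ listPow aw (I j)).flatten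

theorem MyAux.monadicLhs_eq (k : ℕ) (I : Fin k → ℕ) :
    monadicLhs k I = MyAux.Bword k I ++ (bw ++ aw) := by
  simp [monadicLhs, MyAux.Bword, List.append_assoc]

theorem MyAux.exists_C0 (k : ℕ) (hk : 1 ≤ k) (I : Fin k → ℕ) (hI : ∀ j, 1 ≤ I j) :
    ∃ C₀ : List (Fin 2), MyAux.Bword k I = C₀ ++ aw := by
  obtain ⟨k', rfl⟩ : ∃ k', k = k' + 1 := ⟨k - 1, by omega⟩
  obtain ⟨m, hm⟩ : ∃ m, I (Fin.last k') = m + 1 := ⟨I (Fin.last k') - 1, by have := hI (Fin.last k'); omega⟩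
  refine ⟨(List.ofFn fun i : Fin k' =>
      bw ++ listPow aw (I i.castSucc)).flatten ++ (bw ++ listPow aw m), ?_⟩
  rw [MyAux.Bword, List.ofFn_succ', List.concat_eq_append, List.flatten_append]
  simp [hm, MyAux.listPow_succ', List.append_assoc]

theorem MyAux.exists_R (k : ℕ) (hk : 1 ≤ k) (I : Fin k → ℕ) (hI : ∀ j, 1 ≤ I j) :
    ∃ R : List (Fin 2), MyAux.Bword k I = bw ++ aw ++ R := by
  obtain ⟨k', rfl⟩ : ∃ k', k = k' + 1 := ⟨k - 1, by omega⟩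
  obtain ⟨m, hm⟩ : ∃ m, I 0 = m + 1 := ⟨I 0 - 1, by have := hI 0; omega⟩
  refine ⟨listPow aw m ++ (List.ofFn fun i : Fin k' =>
      bw ++ listPow aw (I i.succ)).flatten, ?_⟩
  rw [MyAux.Bword, List.ofFn_succ, List.flatten_cons]
  simp [hm, MyAux.listPow_succ, List.append_assoc]

section Main

variable (k : ℕ) (I : Fin k → ℕ)

local notation "e" => OneRelMonoid.eval (monadicLhs k I) aw

theorem MyAux.e_mid (x y : List (Fin 2)) :
    (e (x ++ monadicLhs k I ++ y)) = e (x ++ aw ++ y) := by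
  rw [MyAux.eval_append, MyAux.eval_append, MyAux.eval_append, MyAux.eval_append,
    MyAux.eval_rel]

theorem MyAux.exists_aa (hk : 1 ≤ k) (hI : ∀ j, 1 ≤ I j) :
    ∃ z : OneRelMonoid (monadicLhs k I) aw, z * e (aw ++ aw) = e aw := by
  obtain ⟨C₀, hC⟩ := MyAux.exists_C0 k hk I hI
  obtain ⟨R, hR⟩ := MyAux.exists_R k hk I hI
  have hL := MyAux.monadicLhs_eq k I
  refine ⟨e (bw ++ C₀), ?_⟩
  calc e (bw ++ C₀) * e (aw ++ aw) = e (bw ++ C₀ ++ (aw ++ aw)) :=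
        (MyAux.eval_append _ _ _ _).symm
    _ = e ((bw ++ MyAux.Bword k I) ++ aw ++ []) := by
        rw [hC]; simp [List.append_assoc]
    _ = e ((bw ++ MyAux.Bword k I) ++ monadicLhs k I ++ []) :=
        (MyAux.e_mid k I _ _).symm
    _ = e (bw ++ monadicLhs k I ++ (R ++ (bw ++ aw))) := by
        rw [hL]; rw [hR]; simp [List.append_assoc]
    _ = e (bw ++ aw ++ (R ++ (bw ++ aw))) := MyAux.e_mid k I _ _
    _ = e ([] ++ monadicLhs k I ++ []) := by
        rw [hL]; rw [hR]; simp [List.append_assoc]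
    _ = e ([] ++ aw ++ []) := MyAux.e_mid k I _ _
    _ = e aw := by simp

theorem MyAux.exists_aba (hk : 1 ≤ k) (hI : ∀ j, 1 ≤ I j) :
    ∃ z : OneRelMonoid (monadicLhs k I) aw, z * e (aw ++ (bw ++ aw)) = e aw := by
  obtain ⟨C₀, hC⟩ := MyAux.exists_C0 k hk I hI
  have hL := MyAux.monadicLhs_eq k I
  refine ⟨e C₀, ?_⟩
  calc e C₀ * e (aw ++ (bw ++ aw)) = e (C₀ ++ (aw ++ (bw ++ aw))) :=
        (MyAux.eval_append _ _ _ _).symm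
    _ = e ([] ++ monadicLhs k I ++ []) := by
        rw [hL]; rw [hC]; simp [List.append_assoc]
    _ = e ([] ++ aw ++ []) := MyAux.e_mid k I _ _
    _ = e aw := by simp

theorem MyAux.key (hk : 1 ≤ k) (hI : ∀ j, 1 ≤ I j) :
    ∀ parts : List (List (Fin 2)), (∀ p ∈ parts, p = aw ∨ p = bw ++ aw) →
      ∃ z : OneRelMonoid (monadicLhs k I) aw,
        z * e (aw ++ parts.flatten) = e aw := by
  intro parts
  induction parts with
  | nil => intro _; exact ⟨1, by simp⟩
  | cons p ps ih =>
    intro h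
    obtain ⟨z, hz⟩ := ih fun q hq => h q (List.mem_cons_of_mem _ hq)
    have step : ∀ y : OneRelMonoid (monadicLhs k I) aw,
        y * e (aw ++ p) = e aw →
        ∃ z' : OneRelMonoid (monadicLhs k I) aw,
          z' * e (aw ++ (p :: ps).flatten) = e aw := by
      intro y hy
      refine ⟨z * y, ?_⟩
      have h1 : aw ++ (p :: ps).flatten = (aw ++ p) ++ ps.flatten := by simp
      calc (z * y) * e (aw ++ (p :: ps).flatten)
          = (z * y) * (e (aw ++ p) * e ps.flatten) := by
            rw [h1, MyAux.eval_append]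
        _ = z * (y * e (aw ++ p)) * e ps.flatten := by
            simp [mul_assoc]
        _ = z * e aw * e ps.flatten := by rw [hy]
        _ = z * e (aw ++ ps.flatten) := by
            rw [mul_assoc, ← MyAux.eval_append]
        _ = e aw := hz
    rcases h p List.mem_cons_self with rfl | rfl
    · obtain ⟨y, hy⟩ := MyAux.exists_aa k I hk hI
      exact step y hy
    · obtain ⟨y, hy⟩ := MyAux.exists_aba k I hk hI
      exact step y hy

theorem MyAux.exists_left (hk : 1 ≤ k) (hI : ∀ j, 1 ≤ I j)
    (parts : List (List (Fin 2))) (hne : parts ≠ [])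
    (hmem : ∀ p ∈ parts, p = aw ∨ p = bw ++ aw) :
    ∃ z : OneRelMonoid (monadicLhs k I) aw,
      z * e parts.flatten = e aw := by
  cases parts with
  | nil => exact absurd rfl hne
  | cons p ps =>
    obtain ⟨z, hz⟩ := MyAux.key k I hk hI ps
      (fun q hq => hmem q (List.mem_cons_of_mem _ hq))
    rcases hmem p List.mem_cons_self with rfl | rfl
    · exact ⟨z, by simpa using hz⟩
    · refine ⟨z * e (MyAux.Bword k I), ?_⟩
      have h1 : e (MyAux.Bword k I) * e ((bw ++ aw) :: ps).flatten
          = e (aw ++ ps.flatten) := by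
        calc e (MyAux.Bword k I) * e ((bw ++ aw) :: ps).flatten
            = e (MyAux.Bword k I ++ ((bw ++ aw) :: ps).flatten) :=
              (MyAux.eval_append _ _ _ _).symm
          _ = e ([] ++ monadicLhs k I ++ ps.flatten) := by
              rw [MyAux.monadicLhs_eq k I]; simp [List.append_assoc]
          _ = e ([] ++ aw ++ ps.flatten) := MyAux.e_mid k I _ _
          _ = e (aw ++ ps.flatten) := by simp
      rw [mul_assoc, h1, hz]

end Main

/-- Let `k ≥ 1` and `i₁, …, i_k ≥ 1`, and let
`M = Mon⟨a, b | b a^{i₁} b a^{i₂} ⋯ b a^{i_k} b a = a⟩`.  Then every nonempty word `w`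
that is a product of factors from `{a, ba}` represents an element of `M` that is
L-related to the image of `a`: the principal left ideals `M·w̄` and `M·ā` coincide. -/
theorem monadic_L_class_of_a (k : ℕ) (hk : 1 ≤ k) (I : Fin k → ℕ) (hI : ∀ j, 1 ≤ I j)
    (w : List (Fin 2))
    (hw : ∃ parts : List (List (Fin 2)), parts ≠ [] ∧
      (∀ p ∈ parts, p = aw ∨ p = bw ++ aw) ∧ w = parts.flatten) :
    (Set.range fun m : OneRelMonoid (monadicLhs k I) aw =>
        m * OneRelMonoid.eval (monadicLhs k I) aw w) =
      (Set.range fun m : OneRelMonoid (monadicLhs k I) aw =>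
        m * OneRelMonoid.eval (monadicLhs k I) aw aw) := by
  obtain ⟨parts, hne, hmem, rfl⟩ := hw
  obtain ⟨z, hz⟩ := MyAux.exists_left k I hk hI parts hne hmem
  -- w ends in the letter a
  have hsplit : ∃ pre : List (Fin 2), parts.flatten = pre ++ aw := by
    have hps : parts.dropLast ++ [parts.getLast hne] = parts :=
      List.dropLast_append_getLast hne
    rcases hmem _ (List.getLast_mem hne) with hp | hp
    · refine ⟨parts.dropLast.flatten, ?_⟩
      conv_lhs => rw [← hps]
      simp [hp]
    · refine ⟨parts.dropLast.flatten ++ bw, ?_⟩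
      conv_lhs => rw [← hps]
      simp [hp, List.append_assoc]
  obtain ⟨pre, hpre⟩ := hsplit
  ext x
  simp only [Set.mem_range]
  constructor
  · rintro ⟨m, rfl⟩
    refine ⟨m * OneRelMonoid.eval (monadicLhs k I) aw pre, ?_⟩
    rw [mul_assoc, ← MyAux.eval_append, ← hpre]
  · rintro ⟨m, rfl⟩
    exact ⟨m * z, by rw [mul_assoc, hz]⟩
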